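/- Let φ : ℝ → ℂ be a Schwartz function and let a be a nonzero real number. Let φ̂(y) = ∫_ℝ φ(x)·exp(2πi·x·y) dx. Then ∫_ℝ φ̂(x)·exp(2πi·a·x²) dx = exp(iπ·sgn(a)/4) · (2|a|)^{−1/2} · ∫_ℝ φ(x)·exp(−2πi·x²/(4a)) dx, where sgn(a) = 1 if a > 0 and sgn(a) = −1 if a < 0. (Both integrals converge absolutely since φ and φ̂ are Schwartz.) -/

import Mathlib

open MeasureTheory

open Complex Real Filter Topology in
private lemma weil_const_eq (a : ℝ) (ha : a ≠ 0) :
    ((I : ℂ) / (2 * a)) ^ (1/2 : ℂ)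
      = Complex.exp (Complex.I * π * (if 0 < a then (1 : ℂ) else -1) / 4)
        * (((2 * |a|) ^ (-(1 / 2 : ℝ)) : ℝ) : ℂ) := by
  have h2a : (0:ℝ) < 2 * |a| := by positivity
  have hz : (I : ℂ) / (2 * a) ≠ 0 := by
    simp [Complex.I_ne_zero, Complex.ofReal_ne_zero.mpr ha]
  have habs : ‖(I / (2 * (a:ℂ)))‖ = (2 * |a|)⁻¹ := by
    rw [norm_div, Complex.norm_I]
    rw [show (2 * (a:ℂ)) = ((2*a : ℝ) : ℂ) by push_cast; ring, Complex.norm_real, Real.norm_eq_abs]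
    rw [abs_mul, one_div]
    norm_num
  have harg : Complex.arg (I / (2 * (a:ℂ))) = (if 0 < a then (1:ℝ) else -1) * (π/2) := by
    rcases lt_or_gt_of_ne ha with hneg | hpos
    · rw [if_neg (not_lt.mpr hneg.le)]
      have h1 : (0:ℝ) < -(2*a)⁻¹ := by
        rw [neg_pos]; exact inv_neg''.mpr (by linarith)
      have : (I : ℂ) / (2*a) = ((-(2*a)⁻¹ : ℝ) : ℂ) * (-I) := by
        push_cast; field_simp
      rw [this, Complex.arg_real_mul _ h1, Complex.arg_neg_I]
      ring
    · rw [if_pos hpos]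
      have : (I : ℂ) / (2*a) = (((2*a)⁻¹ : ℝ) : ℂ) * I := by
        push_cast; field_simp
      rw [this, Complex.arg_real_mul _ (by positivity : (0:ℝ) < (2*a)⁻¹), Complex.arg_I]
      ring
  rw [Complex.cpow_def_of_ne_zero hz, Complex.log, habs, harg]
  rw [Real.log_inv, Real.rpow_def_of_pos h2a, Complex.ofReal_exp, ← Complex.exp_add]
  congr 1
  rcases lt_or_gt_of_ne ha with hneg | hpos
  · rw [if_neg (not_lt.mpr hneg.le), if_neg (not_lt.mpr hneg.le)]
    push_cast
    ring
  · rw [if_pos hpos, if_pos hpos]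
    push_cast
    ring

open Complex Real MeasureTheory in
private lemma weil_fubini_step (φ : SchwartzMap ℝ ℂ) (b : ℂ) (hb : 0 < b.re) :
    (∫ x : ℝ, (∫ t : ℝ, φ t * Complex.exp (2 * π * I * t * x)) *
        Complex.exp (-b * x ^ 2))
      = ((π : ℂ) / b) ^ (1/2 : ℂ) *
        ∫ t : ℝ, φ t * Complex.exp (-((2 * π * t : ℝ) : ℂ) ^ 2 / (4 * b)) := by
  have hnorm : ∀ (t x : ℝ), ‖φ t * Complex.exp (2 * π * I * t * x) *
      Complex.exp (-b * x ^ 2)‖ = ‖φ t‖ * Real.exp (-b.re * x ^ 2) := by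
    intro t x
    rw [norm_mul, norm_mul,
      Complex.norm_exp, Complex.norm_exp]
    have h1 : (2 * (π:ℂ) * I * t * x).re = 0 := by simp
    have h2 : (-b * (x:ℂ) ^ 2).re = -b.re * x ^ 2 := by
      simp [← Complex.ofReal_pow]
    rw [h1, h2, Real.exp_zero, mul_one]
  have hint : Integrable (Function.uncurry fun (x t : ℝ) =>
      φ t * Complex.exp (2 * π * I * t * x) * Complex.exp (-b * x ^ 2))
      (MeasureTheory.volume.prod MeasureTheory.volume) := by
    have hg : Integrable (fun p : ℝ × ℝ => Real.exp (-b.re * p.1 ^ 2) * ‖φ p.2‖)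
        (MeasureTheory.volume.prod MeasureTheory.volume) :=
      (integrable_exp_neg_mul_sq hb).mul_prod φ.integrable.norm
    refine hg.mono' ?_ ?_
    · apply Continuous.aestronglyMeasurable
      fun_prop
    · filter_upwards with p
      rw [Function.uncurry]
      rw [hnorm p.2 p.1]
      rw [mul_comm]
  calc (∫ x : ℝ, (∫ t : ℝ, φ t * Complex.exp (2 * π * I * t * x)) *
        Complex.exp (-b * x ^ 2))
      = ∫ x : ℝ, ∫ t : ℝ, φ t * Complex.exp (2 * π * I * t * x) *
          Complex.exp (-b * x ^ 2) := by
        congr 1; ext x; rw [← integral_mul_const]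
    _ = ∫ t : ℝ, ∫ x : ℝ, φ t * Complex.exp (2 * π * I * t * x) *
          Complex.exp (-b * x ^ 2) := integral_integral_swap hint
    _ = ∫ t : ℝ, φ t * (((π : ℂ) / b) ^ (1/2 : ℂ) *
          Complex.exp (-((2 * π * t : ℝ) : ℂ) ^ 2 / (4 * b))) := by
        congr 1; ext t
        rw [show (fun x : ℝ => φ t * Complex.exp (2 * π * I * t * x) *
            Complex.exp (-b * x ^ 2))
          = fun x : ℝ => φ t * (Complex.exp (I * ((2 * π * t : ℝ) : ℂ) * x) *
            Complex.exp (-b * x ^ 2)) by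
          ext x; rw [mul_assoc]; congr 2; push_cast; ring]
        rw [integral_const_mul, fourierIntegral_gaussian hb]
    _ = ((π : ℂ) / b) ^ (1/2 : ℂ) *
        ∫ t : ℝ, φ t * Complex.exp (-((2 * π * t : ℝ) : ℂ) ^ 2 / (4 * b)) := by
        rw [← integral_const_mul]
        congr 1; ext t; ring

/-- The defining Fourier identity of the one-dimensional real Weil index:
for a Schwartz function `φ` and `a ≠ 0`,
`∫ φ̂(x)·e^{2πiax²} dx = e^{iπ·sgn(a)/4}·(2|a|)^{−1/2}·∫ φ(x)·e^{−2πix²/(4a)} dx`,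
where `φ̂(y) = ∫ φ(x)·e^{2πixy} dx`. -/
theorem weil_index_real_gaussian (φ : SchwartzMap ℝ ℂ) (a : ℝ) (ha : a ≠ 0) :
    (∫ x : ℝ, (∫ t : ℝ, φ t * Complex.exp (2 * Real.pi * Complex.I * t * x)) *
        Complex.exp (2 * Real.pi * Complex.I * a * x ^ 2))
      = Complex.exp (Complex.I * Real.pi * (if 0 < a then (1 : ℂ) else -1) / 4)
        * (((2 * |a|) ^ (-(1 / 2 : ℝ)) : ℝ) : ℂ)
        * ∫ x : ℝ, φ x *
            Complex.exp (-(2 * Real.pi * Complex.I * x ^ 2) / (4 * a)) := by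
  open Complex Real Filter Topology in
  have ha' : (a : ℂ) ≠ 0 := Complex.ofReal_ne_zero.mpr ha
  have hπ : (π : ℂ) ≠ 0 := Complex.ofReal_ne_zero.mpr Real.pi_ne_zero
  set Φ : SchwartzMap ℝ ℂ := (SchwartzMap.fourierTransformCLE ℂ (SchwartzMap ℝ ℂ)).symm φ with hΦdef
  have hΦ : ∀ x : ℝ, (∫ t : ℝ, φ t * Complex.exp (2 * π * I * t * x)) = Φ x := by
    intro x
    rw [hΦdef, show (SchwartzMap.fourierTransformCLE ℂ (SchwartzMap ℝ ℂ)).symm φ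
      = FourierTransformInv.fourierInv φ from rfl, SchwartzMap.fourierInv_coe, Real.fourierInv_eq']
    congr 1; ext t
    rw [smul_eq_mul, mul_comm]
    congr 1
    have : (inner ℝ t x : ℝ) = t * x := by simp [RCLike.inner_apply, mul_comm]
    rw [this]
    push_cast
    ring
  set b : ℝ → ℂ := fun ε => (ε : ℂ) - 2 * π * I * a with hbdef
  have hbre : ∀ ε : ℝ, (b ε).re = ε := by intro ε; simp [hbdef]
  have hbne : ∀ ε : ℝ, b ε ≠ 0 := by
    intro ε h
    have := congrArg Complex.im h
    simp [hbdef, Real.pi_ne_zero, ha] at this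
  have hb0 : (π : ℂ) / b 0 = I / (2 * a) := by
    rw [hbdef]
    have hIa : 2 * (π:ℂ) * I * a ≠ 0 := by
      simp [Complex.I_ne_zero, ha', hπ]
    field_simp
    ring_nf
    simp [Complex.I_sq]
  -- limit of the left-hand side family
  have hF : Tendsto (fun ε : ℝ => ∫ x : ℝ, Φ x * Complex.exp (-(b ε) * x ^ 2))
      (𝓝[>] (0:ℝ)) (𝓝 (∫ x : ℝ, Φ x * Complex.exp (-(b 0) * x ^ 2))) := by
    apply tendsto_integral_filter_of_dominated_convergence (fun x => ‖Φ x‖)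
    · filter_upwards with ε
      exact Continuous.aestronglyMeasurable (by fun_prop)
    · filter_upwards [self_mem_nhdsWithin] with ε hε
      filter_upwards with x
      rw [norm_mul, Complex.norm_exp]
      have hre : (-(b ε) * (x:ℂ) ^ 2).re = -ε * x ^ 2 := by
        simp [hbdef, ← Complex.ofReal_pow]
      rw [hre]
      have h1 : Real.exp (-ε * x ^ 2) ≤ 1 := by
        rw [Real.exp_le_one_iff]
        have : (0:ℝ) < ε := hε
        nlinarith [sq_nonneg x]
      nlinarith [norm_nonneg (Φ x), Real.exp_pos (-ε * x ^ 2)]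
    · exact Φ.integrable.norm
    · filter_upwards with x
      apply Tendsto.mono_left _ nhdsWithin_le_nhds
      exact Continuous.tendsto (by fun_prop) 0
  -- limit of the right-hand integral family
  have hG : Tendsto (fun ε : ℝ => ∫ t : ℝ, φ t *
        Complex.exp (-((2 * π * t : ℝ) : ℂ) ^ 2 / (4 * b ε)))
      (𝓝[>] (0:ℝ)) (𝓝 (∫ t : ℝ, φ t *
        Complex.exp (-((2 * π * t : ℝ) : ℂ) ^ 2 / (4 * b 0)))) := by
    apply tendsto_integral_filter_of_dominated_convergence (fun t => ‖φ t‖)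
    · filter_upwards with ε
      exact Continuous.aestronglyMeasurable (by fun_prop)
    · filter_upwards [self_mem_nhdsWithin] with ε hε
      filter_upwards with t
      rw [norm_mul, Complex.norm_exp]
      have hre : (-((2 * π * t : ℝ) : ℂ) ^ 2 / (4 * b ε)).re
          = (-(2 * π * t) ^ 2) * ((4 * b ε)⁻¹).re := by
        rw [div_eq_mul_inv]
        rw [show (-((2 * π * t : ℝ) : ℂ) ^ 2) = ((-(2 * π * t) ^ 2 : ℝ) : ℂ) by push_cast; ring]
        exact Complex.re_ofReal_mul _ _
      rw [hre]
      have hinv : 0 ≤ ((4 * b ε)⁻¹).re := by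
        rw [Complex.inv_re]
        apply div_nonneg _ (Complex.normSq_nonneg _)
        have : (4 * b ε).re = 4 * ε := by simp [hbdef]
        rw [this]
        have : (0:ℝ) < ε := hε
        linarith
      have h1 : Real.exp ((-(2 * π * t) ^ 2) * ((4 * b ε)⁻¹).re) ≤ 1 := by
        rw [Real.exp_le_one_iff]
        have := sq_nonneg (2 * π * t)
        nlinarith
      nlinarith [norm_nonneg (φ t), Real.exp_pos ((-(2 * π * t) ^ 2) * ((4 * b ε)⁻¹).re)]
    · exact φ.integrable.norm
    · filter_upwards with t
      apply Tendsto.mono_left _ nhdsWithin_le_nhds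
      have hc : ContinuousAt (fun ε : ℝ => φ t *
          Complex.exp (-((2 * π * t : ℝ) : ℂ) ^ 2 / (4 * b ε))) 0 := by
        apply ContinuousAt.mul continuousAt_const
        apply Complex.continuous_exp.continuousAt.comp
        apply ContinuousAt.div continuousAt_const (by fun_prop)
        exact mul_ne_zero (by norm_num) (hbne 0)
      exact hc.tendsto
  -- limit of the constant
  have hC : Tendsto (fun ε : ℝ => ((π : ℂ) / b ε) ^ (1/2 : ℂ))
      (𝓝[>] (0:ℝ)) (𝓝 (((π : ℂ) / b 0) ^ (1/2 : ℂ))) := by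
    apply Tendsto.mono_left _ nhdsWithin_le_nhds
    have h1 : ContinuousAt (fun ε : ℝ => (π : ℂ) / b ε) 0 :=
      ContinuousAt.div continuousAt_const (by fun_prop) (hbne 0)
    have h2 : ContinuousAt (fun ε : ℝ => ((π : ℂ) / b ε) ^ (1/2 : ℂ)) 0 := by
      apply ContinuousAt.cpow h1 continuousAt_const
      rw [Complex.mem_slitPlane_iff]
      right
      rw [hb0]
      have : ((I : ℂ) / (2 * a)).im = (2 * a)⁻¹ := by
        rw [show (2 * (a:ℂ)) = ((2 * a : ℝ) : ℂ) by push_cast; ring]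
        rw [Complex.div_ofReal_im]
        simp
      rw [this]
      simpa using ha
    exact h2.tendsto
  -- the two families agree for ε > 0
  have heq : ∀ᶠ ε in 𝓝[>] (0:ℝ),
      (∫ x : ℝ, Φ x * Complex.exp (-(b ε) * x ^ 2))
        = ((π : ℂ) / b ε) ^ (1/2 : ℂ) * ∫ t : ℝ, φ t *
            Complex.exp (-((2 * π * t : ℝ) : ℂ) ^ 2 / (4 * b ε)) := by
    filter_upwards [self_mem_nhdsWithin] with ε hε
    rw [← weil_fubini_step φ (b ε) (by rw [hbre]; exact hε)]
    simp_rw [hΦ]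
  -- conclude by uniqueness of limits
  have hkey : (∫ x : ℝ, Φ x * Complex.exp (-(b 0) * x ^ 2))
      = ((π : ℂ) / b 0) ^ (1/2 : ℂ) * ∫ t : ℝ, φ t *
          Complex.exp (-((2 * π * t : ℝ) : ℂ) ^ 2 / (4 * b 0)) :=
    tendsto_nhds_unique (hF.congr' heq) (hC.mul hG)
  -- rewrite the statement
  have hL : (∫ x : ℝ, (∫ t : ℝ, φ t * Complex.exp (2 * π * I * t * x)) *
        Complex.exp (2 * π * I * a * x ^ 2))
      = ∫ x : ℝ, Φ x * Complex.exp (-(b 0) * x ^ 2) := by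
    congr 1; ext x
    rw [hΦ]
    congr 2
    rw [hbdef]
    push_cast
    ring
  have hR : ∀ x : ℝ, Complex.exp (-((2 * π * x : ℝ) : ℂ) ^ 2 / (4 * b 0))
      = Complex.exp (-(2 * π * I * x ^ 2) / (4 * a)) := by
    intro x
    congr 1
    rw [hbdef]
    have h4a : (4 : ℂ) * a ≠ 0 := by simp [ha']
    have hb0' : ((0:ℝ):ℂ) - 2 * π * I * a ≠ 0 := hbne 0
    field_simp
    ring_nf
    simp [Complex.I_sq]
    field_simp
    ring
  rw [hL, hkey, hb0, weil_const_eq a ha,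
    MeasureTheory.integral_congr_ae (Filter.Eventually.of_forall fun t => by rw [hR t])]
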